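/- Let k ≥ 1 be a natural number and let w_1, …, w_k be integers with each w_r ∈ {0, 1}. Define f : ℕ → ℤ by f(x) = Σ_{r=1}^{k} w_r · Σ_{j=0}^{r} (−1)^{r−j} · C(2j,j) · C(k−j, r−j) · C(x+j, 2j). Then f(x+1) − f(x) ≡ 2 (mod 4) for every x ∈ {0, 1, …, k−1} if and only if there exists a set T with {2^0, 2^1, …, 2^{⌊log₂ k⌋}} ⊆ T ⊆ {1, 2, …, k} such that for every r ∈ {1, …, k}, w_r ≡ Σ_{j∈T} C(k−r, j−r) (mod 2). -/

import Mathlib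

set_option linter.unusedTactic false
set_option linter.unreachableTactic false

open Finset

lemma lucas2 (n k : ℕ) : (n.choose k : ZMod 2) =
    ((n % 2).choose (k % 2) : ZMod 2) * ((n / 2).choose (k / 2) : ZMod 2) := by
  have := @Choose.choose_modEq_choose_mod_mul_choose_div n k 2 ⟨Nat.prime_two⟩
  have h := (ZMod.intCast_eq_intCast_iff _ _ _).mpr this
  push_cast at h ⊢
  exact_mod_cast h

lemma zmod2_cases (a : ZMod 2) : a = 0 ∨ a = 1 := by revert a; decide

lemma central_parity : ∀ m : ℕ, ((m.choose (m / 2) : ZMod 2) = 1 ↔ ∃ a, m + 1 = 2 ^ a) := by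
  intro m
  induction m using Nat.strong_induction_on with
  | _ m ih =>
    match m, ih with
    | 0, _ => simp; exact ⟨0, rfl⟩
    | (m+1), ih =>
      rcases Nat.even_or_odd (m+1) with he | ho
      · obtain ⟨t, ht⟩ := he
        obtain ⟨u, hu⟩ : ∃ u, t = u + 1 := ⟨t - 1, by omega⟩
        have hm : m = 2*u + 1 := by omega
        have hdiv : (m+1)/2 = u+1 := by omega
        have heq : (m+1).choose ((m+1)/2) = 2 * ((2*u+1).choose u) := by
          rw [hdiv, show m + 1 = (2*u+1) + 1 by omega, Nat.choose_succ_succ,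
            Nat.choose_symm_half]
          ring
        constructor
        · intro h; rw [heq] at h; push_cast at h
          rw [show ((2:ZMod 2)) = 0 by decide, zero_mul] at h
          exact absurd h.symm one_ne_zero
        · rintro ⟨a, ha⟩
          exfalso
          rcases a with _ | a
          · omega
          · obtain ⟨c, hc⟩ : 2 ∣ 2^(a+1) := dvd_pow_self 2 (Nat.succ_ne_zero a)
            omega
      · obtain ⟨t, ht⟩ := ho
        have hdiv : (m+1)/2 = t := by omega
        rw [lucas2, hdiv]
        have h1 : (m+1) % 2 = 1 := by omega
        have h2 : (1:ℕ).choose (t % 2) = 1 := by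
          have : t % 2 = 0 ∨ t % 2 = 1 := by omega
          rcases this with h | h <;> simp [h]
        rw [h1, h2, Nat.cast_one, one_mul]
        rw [ih t (by omega)]
        constructor
        · rintro ⟨a, ha⟩
          refine ⟨a+1, ?_⟩
          rw [pow_succ]; omega
        · rintro ⟨a, ha⟩
          rcases a with _ | a
          · omega
          · exact ⟨a, by rw [pow_succ] at ha; omega⟩

lemma CB_parity (j : ℕ) (hj : 1 ≤ j) :
    (((2*j-1).choose (j-1) : ZMod 2) = 1 ↔ ∃ a, j = 2^a) := by
  have h1 : (2*j-1)/2 = j - 1 := by omega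
  have h2 := central_parity (2*j-1)
  rw [h1] at h2
  rw [h2]; clear h1 h2
  constructor
  · rintro ⟨a, ha⟩
    rcases a with _ | a
    · rw [pow_zero] at ha; omega
    · refine ⟨a, ?_⟩
      have h3 : 2 * j = 2 * 2^a := by rw [pow_succ] at ha; omega
      omega
  · rintro ⟨a, ha⟩
    refine ⟨a+1, ?_⟩
    have : 2^(a+1) = 2*2^a := by rw [pow_succ]; ring
    omega

lemma ones_parity : ∀ (b n : ℕ), ((n.choose (2^b - 1) : ZMod 2) = 1 ↔ n % 2^b = 2^b - 1) := by
  intro b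
  induction b with
  | zero => intro n; simp [Nat.mod_one]
  | succ b ih =>
    intro n
    have e1 : 2^(b+1) = 2*2^b := by rw [pow_succ]; ring
    have h3 : 1 ≤ 2^b := Nat.one_le_two_pow
    have h1 : (2^(b+1) - 1) % 2 = 1 := by omega
    have h2 : (2^(b+1) - 1) / 2 = 2^b - 1 := by omega
    rw [lucas2, h1, h2, Nat.choose_one_right]
    have hm2 : n % 2 < 2 := Nat.mod_lt _ (by norm_num)
    have key : n % 2^(b+1) = 2^(b+1) - 1 ↔ (n % 2 = 1 ∧ (n/2) % 2^b = 2^b - 1) := by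
      set r := (n/2) % 2^b with hrdef
      have hr : r < 2^b := Nat.mod_lt _ (by positivity)
      have hqr : n / 2 = 2^b * ((n/2)/2^b) + r := (Nat.div_add_mod _ _).symm
      have hn : n = 2 * (n / 2) + n % 2 := by omega
      have hmod : n % (2^(b+1)) = 2*r + n % 2 := by
        have h6 : 2*2^b*((n/2)/2^b) = 2*(2^b*((n/2)/2^b)) := by ring
        have h5 : n = 2*r + n%2 + (2*2^b)*((n/2)/2^b) := by omega
        calc n % (2^(b+1)) = (2*r + n%2 + (2*2^b)*((n/2)/2^b)) % (2*2^b) := by rw [← h5, e1]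
          _ = (2*r + n%2) % (2*2^b) := Nat.add_mul_mod_self_left _ _ _
          _ = 2*r + n%2 := Nat.mod_eq_of_lt (by omega)
      rw [hmod, e1]
      omega
    rw [key]
    rcases Nat.even_or_odd n with he | ho
    · rw [Nat.even_iff] at he
      rw [he]
      simp
    · rw [Nat.odd_iff] at ho
      rw [ho, Nat.cast_one, one_mul, ih]
      simp

lemma lowbit_iff (x a : ℕ) : x % 2^(a+1) = 2^a - 1 ↔ a = (x+1).factorization 2 := by
  have e1 : 2^(a+1) = 2*2^a := by rw [pow_succ]; ring
  have h3 : 1 ≤ 2^a := Nat.one_le_two_pow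
  have key : ∀ q : ℕ, (2^(a+1) * q + 2^a) % 2^(a+1) = 2^a := by
    intro q
    rw [Nat.mul_add_mod]
    exact Nat.mod_eq_of_lt (by omega)
  have step1 : x % 2^(a+1) = 2^a - 1 ↔ (x + 1) % 2^(a+1) = 2^a := by
    constructor
    · intro h
      have hx : x = 2^(a+1) * (x / 2^(a+1)) + (2^a - 1) := by
        conv_lhs => rw [← Nat.div_add_mod x (2^(a+1))]
        rw [h]
      have hx1 : x + 1 = 2^(a+1) * (x / 2^(a+1)) + 2^a := by omega
      rw [hx1]; exact key _
    · intro h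
      have hx : x + 1 = 2^(a+1) * ((x+1) / 2^(a+1)) + 2^a := by
        conv_lhs => rw [← Nat.div_add_mod (x+1) (2^(a+1))]
        rw [h]
      have hx1 : x = 2^(a+1) * ((x+1) / 2^(a+1)) + (2^a - 1) := by omega
      rw [hx1, Nat.mul_add_mod]
      exact Nat.mod_eq_of_lt (by omega)
  have step2 : (x+1) % 2^(a+1) = 2^a ↔ (2^a ∣ x + 1 ∧ ¬ 2^(a+1) ∣ x + 1) := by
    constructor
    · intro h
      have hx : x + 1 = 2^(a+1) * ((x+1) / 2^(a+1)) + 2^a := by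
        conv_lhs => rw [← Nat.div_add_mod (x+1) (2^(a+1))]
        rw [h]
      constructor
      · refine ⟨2 * ((x+1) / 2^(a+1)) + 1, ?_⟩
        conv_lhs => rw [hx]
        rw [e1]; ring
      · intro hdvd
        have h0 : (x+1) % 2^(a+1) = 0 := Nat.mod_eq_zero_of_dvd hdvd
        omega
    · rintro ⟨⟨u, hu⟩, hndvd⟩
      have hodd : u % 2 = 1 := by
        rcases Nat.even_or_odd u with he | ho
        · exfalso; apply hndvd
          rw [Nat.even_iff] at he
          refine ⟨u/2, ?_⟩
          rw [hu, e1]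
          calc 2^a * u = 2^a * (2 * (u/2)) := by rw [show 2*(u/2) = u by omega]
            _ = 2*2^a*(u/2) := by ring
        · rwa [Nat.odd_iff] at ho
      have hx : x + 1 = 2^(a+1) * (u/2) + 2^a := by
        rw [hu, e1]
        calc 2^a * u = 2^a * (2*(u/2)+1) := by rw [show 2*(u/2)+1 = u by omega]
          _ = 2*2^a*(u/2) + 2^a := by ring
      rw [hx]; exact key _
  have step3 : (2^a ∣ x + 1 ∧ ¬ 2^(a+1) ∣ x + 1) ↔ a = (x+1).factorization 2 := by
    rw [Nat.Prime.pow_dvd_iff_le_factorization Nat.prime_two (by omega),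
      Nat.Prime.pow_dvd_iff_le_factorization Nat.prime_two (by omega)]
    omega
  rw [step1, step2, step3]

lemma my_sum_Icc_Icc_comm {M : Type*} [AddCommMonoid M] (a b : ℕ) (F : ℕ → ℕ → M) :
    ∑ r ∈ Icc a b, ∑ j ∈ Icc a r, F r j = ∑ j ∈ Icc a b, ∑ r ∈ Icc j b, F r j := by
  have h := Finset.sum_Ico_Ico_comm a (b+1) (fun j r => F r j)
  simp only [Finset.Ico_add_one_right_eq_Icc] at h
  exact h.symm

lemma choose_conv (n m : ℕ) :
    ∑ t ∈ range (m+1), (n.choose t) * ((n - t).choose (m - t)) = n.choose m * 2^m := by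
  have hterm : ∀ t ∈ range (m+1), n.choose t * ((n-t).choose (m-t)) = n.choose m * m.choose t := by
    intro t ht
    rw [mem_range] at ht
    have htm : t ≤ m := by omega
    by_cases hmn : m ≤ n
    · exact (Nat.choose_mul htm).symm
    · push_neg at hmn
      rw [Nat.choose_eq_zero_of_lt hmn, zero_mul]
      by_cases htn : t ≤ n
      · rw [Nat.choose_eq_zero_of_lt (by omega : n - t < m - t), mul_zero]
      · rw [Nat.choose_eq_zero_of_lt (by omega), zero_mul]
  rw [Finset.sum_congr rfl hterm, ← Finset.mul_sum, Nat.sum_range_choose]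

lemma Mop_invol (k : ℕ) (u : ℕ → ZMod 2) (j : ℕ) (hjk : j ≤ k) :
    ∑ r ∈ Icc j k, ((k-j).choose (r-j) : ZMod 2) *
      ∑ s ∈ Icc r k, ((k-r).choose (s-r) : ZMod 2) * u s = u j := by
  have step : ∀ r, ((k-j).choose (r-j) : ZMod 2) * ∑ s ∈ Icc r k, ((k-r).choose (s-r) : ZMod 2) * u s
      = ∑ s ∈ Icc r k, ((k-j).choose (r-j) : ZMod 2) * ((k-r).choose (s-r) : ZMod 2) * u s := by
    intro r; rw [Finset.mul_sum]; exact Finset.sum_congr rfl fun s _ => by ring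
  simp only [step]
  rw [← my_sum_Icc_Icc_comm j k (fun s r => ((k-j).choose (r-j) : ZMod 2) * ((k-r).choose (s-r) : ZMod 2) * u s)]
  have inner : ∀ s ∈ Icc j k,
      ∑ r ∈ Icc j s, ((k-j).choose (r-j) : ZMod 2) * ((k-r).choose (s-r) : ZMod 2) * u s
      = (((k-j).choose (s-j) : ℕ) : ZMod 2) * (2 : ZMod 2)^(s-j) * u s := by
    intro s hs
    rw [mem_Icc] at hs
    rw [← Finset.sum_mul]
    congr 1
    have hreindex : ∑ r ∈ Icc j s, ((k-j).choose (r-j) : ZMod 2) * ((k-r).choose (s-r) : ZMod 2)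
        = ∑ t ∈ range (s-j+1), ((k-j).choose t : ZMod 2) * (((k-j)-t).choose ((s-j)-t) : ZMod 2) := by
      rw [← Finset.Ico_add_one_right_eq_Icc, Finset.sum_Ico_eq_sum_range]
      apply Finset.sum_congr (by congr 1; omega)
      intro t _
      have e1 : j + t - j = t := by omega
      have e2 : k - (j+t) = k - j - t := by omega
      have e3 : s - (j+t) = s - j - t := by omega
      rw [e1, e2, e3]
    rw [hreindex]
    have := choose_conv (k-j) (s-j)
    calc ∑ t ∈ range (s-j+1), ((k-j).choose t : ZMod 2) * (((k-j)-t).choose ((s-j)-t) : ZMod 2)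
        = ((∑ t ∈ range (s-j+1), (k-j).choose t * (((k-j)-t).choose ((s-j)-t)) : ℕ) : ZMod 2) := by
          push_cast; ring_nf
      _ = (((k-j).choose (s-j) * 2^(s-j) : ℕ) : ZMod 2) := by rw [this]
      _ = (((k-j).choose (s-j) : ℕ) : ZMod 2) * (2:ZMod 2)^(s-j) := by push_cast; ring
  rw [Finset.sum_congr rfl inner]
  rw [Finset.sum_eq_single j]
  · simp
  · intro s hs hne
    rw [mem_Icc] at hs
    have : (2:ZMod 2)^(s-j) = 0 := by
      rw [show (2:ZMod 2) = 0 by decide, zero_pow]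
      omega
    rw [this]; ring
  · intro h
    exact absurd (mem_Icc.mpr ⟨le_refl j, hjk⟩) h

lemma central_two (u : ℕ) : (2*(u+1)).choose (u+1) = 2 * ((2*u+1).choose u) := by
  rw [show 2*(u+1) = (2*u+1)+1 by ring, Nat.choose_succ_succ, Nat.choose_symm_half]
  ring

lemma diff_term (x r j : ℕ) :
    (-1 : ℤ) ^ (r - j) * ((2 * j).choose j : ℤ) * (((k:ℕ) - j).choose (r - j) : ℤ) *
      (((x + 1 + j).choose (2 * j) : ℤ) - ((x + j).choose (2 * j) : ℤ))
    = 2 * (if j = 0 then 0 else (-1 : ℤ)^(r-j) * ((2*j-1).choose (j-1) : ℤ) *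
        (((k:ℕ)-j).choose (r-j) : ℤ) * ((x+j).choose (2*j-1) : ℤ)) := by
  rcases j with _ | u
  · simp
  · rw [if_neg (Nat.succ_ne_zero u)]
    have h1 : (x + 1 + (u+1)).choose (2*(u+1)) = (x+(u+1)).choose (2*(u+1)-1) + (x+(u+1)).choose (2*(u+1)) := by
      rw [show x + 1 + (u+1) = (x+(u+1)) + 1 by ring, show 2*(u+1) = (2*(u+1)-1) + 1 by omega,
        Nat.choose_succ_succ]
      congr 2 <;> omega
    have h2 : (2*(u+1)).choose (u+1) = 2 * ((2*(u+1)-1).choose ((u+1)-1)) := by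
      rw [central_two]
      congr 2 <;> omega
    rw [h1, h2]
    push_cast
    ring

lemma shift_mod (x a : ℕ) : (x + 2^a) % 2^(a+1) = 2^(a+1) - 1 ↔ x % 2^(a+1) = 2^a - 1 := by
  have e1 : (2:ℕ)^(a+1) = 2*2^a := by rw [pow_succ]; ring
  have h3 : 1 ≤ 2^a := Nat.one_le_two_pow
  set r := x % 2^(a+1) with hrdef
  have hr : r < 2^(a+1) := Nat.mod_lt _ (by positivity)
  have hx : x = 2^(a+1) * (x / 2^(a+1)) + r := by rw [hrdef, Nat.div_add_mod]
  by_cases hc : r < 2^a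
  · have hmod : (x + 2^a) % 2^(a+1) = r + 2^a := by
      have hx2 : x + 2^a = 2^(a+1) * (x / 2^(a+1)) + (r + 2^a) := by omega
      rw [hx2, Nat.mul_add_mod]
      exact Nat.mod_eq_of_lt (by omega)
    rw [hmod]
    omega
  · have hmod : (x + 2^a) % 2^(a+1) = r - 2^a := by
      have hx2 : x + 2^a = 2^(a+1) * (x / 2^(a+1) + 1) + (r - 2^a) := by
        have : 2^(a+1) * (x / 2^(a+1) + 1) = 2^(a+1) * (x / 2^(a+1)) + 2^(a+1) := by ring
        omega
      rw [hx2, Nat.mul_add_mod]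
      exact Nat.mod_eq_of_lt (by omega)
    rw [hmod]
    omega

lemma CX_eval (x a : ℕ) :
    (((x + 2^a).choose (2*2^a - 1) : ZMod 2) = 1) ↔ a = (x+1).factorization 2 := by
  have e1 : (2:ℕ)*2^a = 2^(a+1) := by rw [pow_succ]; ring
  rw [e1, ones_parity (a+1) (x+2^a), shift_mod, lowbit_iff]

lemma two_mul_modeq (S : ℤ) : (2*S ≡ 2 [ZMOD 4]) ↔ ((S : ZMod 2) = 1) := by
  have h1 : (2*S ≡ 2 [ZMOD 4]) ↔ (4:ℤ) ∣ 2 - 2*S := Int.modEq_iff_dvd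
  have h2 : (S ≡ 1 [ZMOD 2]) ↔ (2:ℤ) ∣ 1 - S := Int.modEq_iff_dvd
  have h4 : ((4:ℤ) ∣ 2 - 2*S) ↔ (2:ℤ) ∣ 1 - S := by
    constructor
    · rintro ⟨c, hc⟩; exact ⟨c, by linarith⟩
    · rintro ⟨c, hc⟩; exact ⟨c, by linarith⟩
  have h5 := ZMod.intCast_eq_intCast_iff S 1 2
  push_cast at h5
  rw [h1, h4, ← h2, h5]

lemma pow_v_le (x : ℕ) : 2^((x+1).factorization 2) ≤ x + 1 :=
  Nat.le_of_dvd (by omega) (Nat.ordProj_dvd (x+1) 2)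

lemma Sbar_eq (k : ℕ) (u : ℕ → ZMod 2) (x : ℕ) (hx : x < k) :
    ∑ r ∈ Icc 1 k, u r * ∑ j ∈ Icc 1 r,
        ((2*j-1).choose (j-1) : ZMod 2) * ((k-j).choose (r-j) : ZMod 2) *
        ((x+j).choose (2*j-1) : ZMod 2)
    = ∑ r ∈ Icc (2^((x+1).factorization 2)) k,
        ((k - 2^((x+1).factorization 2)).choose (r - 2^((x+1).factorization 2)) : ZMod 2) * u r := by
  set a0 := (x+1).factorization 2 with ha0
  have hj0k : 2^a0 ≤ k := le_trans (pow_v_le x) (by omega)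
  have step1 : ∀ r ∈ Icc 1 k, u r * ∑ j ∈ Icc 1 r,
        ((2*j-1).choose (j-1) : ZMod 2) * ((k-j).choose (r-j) : ZMod 2) *
        ((x+j).choose (2*j-1) : ZMod 2)
      = ∑ j ∈ Icc 1 r, (((2*j-1).choose (j-1) : ZMod 2) * ((x+j).choose (2*j-1) : ZMod 2)) *
          (((k-j).choose (r-j) : ZMod 2) * u r) := by
    intro r _
    rw [Finset.mul_sum]
    exact Finset.sum_congr rfl fun j _ => by ring
  rw [Finset.sum_congr rfl step1]
  rw [my_sum_Icc_Icc_comm 1 k (fun r j => (((2*j-1).choose (j-1) : ZMod 2) *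
      ((x+j).choose (2*j-1) : ZMod 2)) * (((k-j).choose (r-j) : ZMod 2) * u r))]
  have step2 : ∀ j ∈ Icc 1 k,
      ∑ r ∈ Icc j k, (((2*j-1).choose (j-1) : ZMod 2) * ((x+j).choose (2*j-1) : ZMod 2)) *
          (((k-j).choose (r-j) : ZMod 2) * u r)
      = (((2*j-1).choose (j-1) : ZMod 2) * ((x+j).choose (2*j-1) : ZMod 2)) *
          ∑ r ∈ Icc j k, ((k-j).choose (r-j) : ZMod 2) * u r := by
    intro j _
    rw [Finset.mul_sum]
  rw [Finset.sum_congr rfl step2]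
  rw [Finset.sum_eq_single (2^a0)]
  · have hCB : ((2*2^a0-1).choose (2^a0-1) : ZMod 2) = 1 :=
      (CB_parity (2^a0) Nat.one_le_two_pow).mpr ⟨a0, rfl⟩
    have hCX : ((x+2^a0).choose (2*2^a0-1) : ZMod 2) = 1 := (CX_eval x a0).mpr rfl
    rw [hCB, hCX]
    ring
  · intro j hj hne
    rw [mem_Icc] at hj
    by_cases hp : ∃ a, j = 2^a
    · obtain ⟨a, rfl⟩ := hp
      have hane : a ≠ a0 := fun h => hne (by rw [h])
      have hCX : ((x+2^a).choose (2*2^a-1) : ZMod 2) = 0 := by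
        rcases zmod2_cases ((x+2^a).choose (2*2^a-1) : ZMod 2) with h | h
        · exact h
        · exact absurd ((CX_eval x a).mp h) hane
      rw [hCX]
      ring
    · have hCB : ((2*j-1).choose (j-1) : ZMod 2) = 0 := by
        rcases zmod2_cases ((2*j-1).choose (j-1) : ZMod 2) with h | h
        · exact h
        · exact absurd ((CB_parity j hj.1).mp h) hp
      rw [hCB]
      ring
  · intro h
    exact absurd (mem_Icc.mpr ⟨Nat.one_le_two_pow, hj0k⟩) h

lemma intmod2_iff (A B : ℤ) : (A ≡ B [ZMOD 2]) ↔ ((A : ZMod 2) = (B : ZMod 2)) := by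
  have h5 := ZMod.intCast_eq_intCast_iff A B 2
  push_cast at h5
  exact h5.symm

lemma stepA (k : ℕ) (w : ℕ → ℤ) (x : ℕ) :
    (∑ r ∈ Icc 1 k, w r * ∑ j ∈ range (r+1), (-1:ℤ)^(r-j) * ((2*j).choose j : ℤ) *
        ((k-j).choose (r-j) : ℤ) * ((x+1+j).choose (2*j) : ℤ))
    - (∑ r ∈ Icc 1 k, w r * ∑ j ∈ range (r+1), (-1:ℤ)^(r-j) * ((2*j).choose j : ℤ) *
        ((k-j).choose (r-j) : ℤ) * ((x+j).choose (2*j) : ℤ))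
    = 2 * ∑ r ∈ Icc 1 k, w r * ∑ j ∈ Icc 1 r, (-1:ℤ)^(r-j) * ((2*j-1).choose (j-1) : ℤ) *
        ((k-j).choose (r-j) : ℤ) * ((x+j).choose (2*j-1) : ℤ) := by
  rw [← Finset.sum_sub_distrib, Finset.mul_sum]
  apply Finset.sum_congr rfl
  intro r _
  rw [← mul_sub, ← Finset.sum_sub_distrib]
  have inner : ∑ j ∈ range (r+1),
      ((-1:ℤ)^(r-j) * ((2*j).choose j : ℤ) * ((k-j).choose (r-j) : ℤ) * ((x+1+j).choose (2*j) : ℤ)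
      - (-1:ℤ)^(r-j) * ((2*j).choose j : ℤ) * ((k-j).choose (r-j) : ℤ) * ((x+j).choose (2*j) : ℤ))
      = 2 * ∑ j ∈ Icc 1 r, (-1:ℤ)^(r-j) * ((2*j-1).choose (j-1) : ℤ) *
        ((k-j).choose (r-j) : ℤ) * ((x+j).choose (2*j-1) : ℤ) := by
    have e : ∀ j ∈ range (r+1),
        ((-1:ℤ)^(r-j) * ((2*j).choose j : ℤ) * ((k-j).choose (r-j) : ℤ) * ((x+1+j).choose (2*j) : ℤ)
        - (-1:ℤ)^(r-j) * ((2*j).choose j : ℤ) * ((k-j).choose (r-j) : ℤ) * ((x+j).choose (2*j) : ℤ))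
        = 2 * (if j = 0 then 0 else (-1:ℤ)^(r-j) * ((2*j-1).choose (j-1) : ℤ) *
          ((k-j).choose (r-j) : ℤ) * ((x+j).choose (2*j-1) : ℤ)) := by
      intro j _
      rw [← diff_term (k := k) x r j]
      ring
    rw [Finset.sum_congr rfl e, ← Finset.mul_sum]
    congr 1
    rw [Finset.sum_range_succ']
    simp only [Nat.succ_ne_zero, if_neg, if_pos, add_zero, reduceIte]
    rw [← Finset.Ico_add_one_right_eq_Icc, Finset.sum_Ico_eq_sum_range]
    simp only [Nat.add_sub_cancel]
    apply Finset.sum_congr rfl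
    intro i _
    rw [Nat.add_comm 1 i]
    norm_num
  rw [inner]
  ring

lemma sumT (k r : ℕ) (hr : 1 ≤ r) (T : Finset ℕ) (hT : T ⊆ Icc 1 k) :
    ((∑ j ∈ T, (if r ≤ j then ((k-r).choose (j-r) : ℤ) else 0) : ℤ) : ZMod 2)
    = ∑ s ∈ Icc r k, ((k-r).choose (s-r) : ZMod 2) * (if s ∈ T then 1 else 0) := by
  push_cast
  have e2 : ∑ j ∈ T, (if r ≤ j then ((k-r).choose (j-r) : ZMod 2) else 0)
      = ∑ j ∈ Icc 1 k, (if j ∈ T then (if r ≤ j then ((k-r).choose (j-r) : ZMod 2) else 0) else 0) := by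
    rw [Finset.sum_ite_mem, Finset.inter_eq_right.mpr hT]
  rw [e2]
  have e3 : ∀ j ∈ Icc 1 k, (if j ∈ T then (if r ≤ j then ((k-r).choose (j-r) : ZMod 2) else 0) else 0)
      = if r ≤ j then ((k-r).choose (j-r) : ZMod 2) * (if j ∈ T then 1 else 0) else 0 := by
    intro j _; split_ifs <;> simp
  rw [Finset.sum_congr rfl e3, ← Finset.sum_filter]
  apply Finset.sum_congr
  · ext j; simp only [mem_filter, mem_Icc]; omega
  · intros; rfl

set_option linter.unusedVariables false

/-- Construction of all graphs of the Johnson scheme `J(2k,k)` with perfect state transfer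
at time `π/2` (0/1 weights `w_r`): `f(x+1) - f(x) ≡ 2 (mod 4)` for all `x ∈ {0,…,k-1}`
iff `w_r ≡ Σ_{j ∈ T} C(k-r, j-r) (mod 2)` for some set `T` with
`{2^0, …, 2^{⌊log₂ k⌋}} ⊆ T ⊆ {1,…,k}`. -/
theorem stmt_17 (k : ℕ) (hk : 1 ≤ k)
    (w : ℕ → ℤ) (hw : ∀ r, 1 ≤ r → r ≤ k → w r = 0 ∨ w r = 1)
    (f : ℕ → ℤ)
    (hf : ∀ x, f x = ∑ r ∈ Finset.Icc 1 k, w r *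
        ∑ j ∈ Finset.range (r + 1), (-1 : ℤ) ^ (r - j) *
          (Nat.choose (2 * j) j : ℤ) * (Nat.choose (k - j) (r - j) : ℤ) *
          (Nat.choose (x + j) (2 * j) : ℤ)) :
    (∀ x < k, f (x + 1) - f x ≡ 2 [ZMOD 4]) ↔
      (∃ T : Finset ℕ,
        (∀ a, a ≤ Nat.log 2 k → 2 ^ a ∈ T) ∧
        (T ⊆ Finset.Icc 1 k) ∧
        (∀ r, 1 ≤ r → r ≤ k →
          w r ≡ ∑ j ∈ T,
            (if r ≤ j then (Nat.choose (k - r) (j - r) : ℤ) else 0) [ZMOD 2])) := by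
  classical
  have hS : ∀ x, f (x+1) - f x = 2 * ∑ r ∈ Icc 1 k, w r * ∑ j ∈ Icc 1 r,
      (-1:ℤ)^(r-j) * ((2*j-1).choose (j-1):ℤ) * ((k-j).choose (r-j):ℤ) *
      ((x+j).choose (2*j-1):ℤ) := by
    intro x
    rw [hf, hf]
    exact stepA k w x
  have hcast : ∀ x, (((∑ r ∈ Icc 1 k, w r * ∑ j ∈ Icc 1 r,
      (-1:ℤ)^(r-j) * ((2*j-1).choose (j-1):ℤ) * ((k-j).choose (r-j):ℤ) *
      ((x+j).choose (2*j-1):ℤ)) : ℤ) : ZMod 2)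
      = ∑ r ∈ Icc 1 k, ((w r : ℤ) : ZMod 2) * ∑ j ∈ Icc 1 r,
      ((2*j-1).choose (j-1) : ZMod 2) * ((k-j).choose (r-j) : ZMod 2) *
      ((x+j).choose (2*j-1) : ZMod 2) := by
    intro x
    push_cast
    apply Finset.sum_congr rfl
    intro r _
    congr 1
    apply Finset.sum_congr rfl
    intro j _
    rw [show ((-1 : ZMod 2)) = 1 by decide, one_pow, one_mul]
  have key1 : (∀ x < k, f (x + 1) - f x ≡ 2 [ZMOD 4]) ↔
      (∀ x < k, (∑ r ∈ Icc (2^((x+1).factorization 2)) k,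
        ((k - 2^((x+1).factorization 2)).choose (r - 2^((x+1).factorization 2)) : ZMod 2) *
        ((w r : ℤ) : ZMod 2)) = 1) := by
    apply forall_congr'
    intro x
    apply imp_congr_right
    intro hx
    rw [hS x, two_mul_modeq, hcast x, Sbar_eq k (fun r => ((w r : ℤ) : ZMod 2)) x hx]
  have key2 : (∀ x < k, (∑ r ∈ Icc (2^((x+1).factorization 2)) k,
        ((k - 2^((x+1).factorization 2)).choose (r - 2^((x+1).factorization 2)) : ZMod 2) *
        ((w r : ℤ) : ZMod 2)) = 1) ↔
      (∀ a, a ≤ Nat.log 2 k → (∑ r ∈ Icc (2^a) k,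
        ((k - 2^a).choose (r - 2^a) : ZMod 2) * ((w r : ℤ) : ZMod 2)) = 1) := by
    constructor
    · intro h a ha
      have hak : 2^a ≤ k := Nat.pow_le_of_le_log (by omega) ha
      have h1 : 1 ≤ (2:ℕ)^a := Nat.one_le_two_pow
      have hx : 2^a - 1 < k := by omega
      have hfact : ((2^a - 1) + 1).factorization 2 = a := by
        rw [show (2^a - 1) + 1 = 2^a by omega, Nat.Prime.factorization_pow Nat.prime_two]
        exact Finsupp.single_eq_same
      have := h (2^a - 1) hx
      rwa [hfact] at this
    · intro h x hx
      apply h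
      have h1 : 2^((x+1).factorization 2) ≤ k := le_trans (pow_v_le x) (by omega)
      exact (Nat.le_log_iff_pow_le (by norm_num) (by omega)).mpr h1
  rw [key1, key2]
  constructor
  · rintro h
    refine ⟨(Icc 1 k).filter (fun j => (∑ r ∈ Icc j k,
        ((k - j).choose (r - j) : ZMod 2) * ((w r : ℤ) : ZMod 2)) = 1), ?_, filter_subset _ _, ?_⟩
    · intro a ha
      have hak : 2^a ≤ k := Nat.pow_le_of_le_log (by omega) ha
      rw [mem_filter]
      exact ⟨mem_Icc.mpr ⟨Nat.one_le_two_pow, hak⟩, h a ha⟩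
    · intro r h1r hrk
      rw [intmod2_iff, sumT k r h1r _ (filter_subset _ _)]
      have hsub : ∀ s ∈ Icc r k, ((k-r).choose (s-r) : ZMod 2) *
          (if s ∈ (Icc 1 k).filter (fun j => (∑ r' ∈ Icc j k,
            ((k - j).choose (r' - j) : ZMod 2) * ((w r' : ℤ) : ZMod 2)) = 1) then 1 else 0)
          = ((k-r).choose (s-r) : ZMod 2) * (∑ r' ∈ Icc s k,
            ((k - s).choose (r' - s) : ZMod 2) * ((w r' : ℤ) : ZMod 2)) := by
        intro s hs
        rw [mem_Icc] at hs
        congr 1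
        rcases zmod2_cases (∑ r' ∈ Icc s k, ((k - s).choose (r' - s) : ZMod 2) *
            ((w r' : ℤ) : ZMod 2)) with h0 | h1
        · rw [h0, if_neg]
          intro hc
          have hc2 := (mem_filter.mp hc).2
          rw [h0] at hc2
          exact one_ne_zero hc2.symm
        · rw [h1, if_pos]
          exact mem_filter.mpr ⟨mem_Icc.mpr ⟨by omega, hs.2⟩, h1⟩
      rw [Finset.sum_congr rfl hsub, Mop_invol k (fun r => ((w r : ℤ) : ZMod 2)) r hrk]
  · rintro ⟨T, hpow, hTsub, hcong⟩ a ha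
    have hak : 2^a ≤ k := Nat.pow_le_of_le_log (by omega) ha
    have hwr : ∀ r ∈ Icc (2^a) k, ((w r : ℤ) : ZMod 2)
        = ∑ s ∈ Icc r k, ((k-r).choose (s-r) : ZMod 2) * (if s ∈ T then 1 else 0) := by
      intro r hr
      rw [mem_Icc] at hr
      have h1r : 1 ≤ r := le_trans Nat.one_le_two_pow hr.1
      have := (intmod2_iff _ _).mp (hcong r h1r hr.2)
      rw [this, sumT k r h1r T hTsub]
    rw [Finset.sum_congr rfl (fun r hr => by rw [hwr r hr]),
      Mop_invol k (fun s => if s ∈ T then 1 else 0) (2^a) hak]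
    exact if_pos (hpow a ha)
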